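/- Let n ≥ 4 with n − 1 odd, let o ∈ ℝ² and r > 0, and let S be the set consisting of the center o together with the n − 1 points o + r·(cos(2πk/(n−1)), sin(2πk/(n−1))) for k = 0, 1, …, n − 2 (n − 1 points equally spaced around a circle of radius r, plus its center). Then every counterclockwise polygonization of S has some interior angle of measure at least 2π − 2π/(n−1). -/

import Mathlib

open Real EuclideanGeometry
open scoped RealInnerProductSpace

noncomputable section

/-- The Euclidean plane ℝ². -/
abbrev Plane : Type := EuclideanSpace ℝ (Fin 2)

instance : Fact (Module.finrank ℝ Plane = 2) := ⟨finrank_euclideanSpace_fin⟩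

/-- The standard orientation of the plane. -/
def planeOrientation : Orientation ℝ Plane (Fin 2) :=
  (EuclideanSpace.basisFun (Fin 2) ℝ).toBasis.orientation

/-- The determinant `det(p, q)` of the 2×2 matrix with columns `p`, `q`. -/
def det2 (p q : Plane) : ℝ := p 0 * q 1 - p 1 * q 0

/-- A set of points is in general position if no three of its points are collinear. -/
def GeneralPosition (S : Set Plane) : Prop :=
  ∀ p ∈ S, ∀ q ∈ S, ∀ r ∈ S, p ≠ q → p ≠ r → q ≠ r →
    ¬ Collinear ℝ ({p, q, r} : Set Plane)

/-- `v : ZMod n → Plane` is a polygonization of `S`: a bijection from `ℤ/nℤ` onto `S`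
such that the closed segments `[v i, v (i+1)]` form a simple closed polygon:
consecutive segments meet exactly in their common endpoint, and non-consecutive
segments are disjoint. -/
def IsPolygonization (n : ℕ) (S : Set Plane) (v : ZMod n → Plane) : Prop :=
  Function.Injective v ∧ Set.range v = S ∧
  (∀ i : ZMod n,
    segment ℝ (v i) (v (i + 1)) ∩ segment ℝ (v (i + 1)) (v (i + 2)) = {v (i + 1)}) ∧
  (∀ i j : ZMod n, i ≠ j → i + 1 ≠ j → j + 1 ≠ i →
    Disjoint (segment ℝ (v i) (v (i + 1))) (segment ℝ (v j) (v (j + 1))))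

/-- A polygonization is counterclockwise if its signed area
`(1/2)·Σ_i det(v i, v (i+1))` is positive. -/
def Counterclockwise (n : ℕ) (v : ZMod n → Plane) : Prop :=
  0 < (1 / 2 : ℝ) * ∑ i ∈ Finset.range n, det2 (v (i : ZMod n)) (v ((i : ZMod n) + 1))

/-- The interior angle at vertex `v i` of a counterclockwise polygonization: the unique
real number in `(0, 2π)` congruent modulo `2π` to the oriented angle from
`v (i+1) - v i` to `v (i-1) - v i`. -/
def interiorAngle (n : ℕ) (v : ZMod n → Plane) (i : ZMod n) : ℝ :=
  let a := (planeOrientation.oangle (v (i + 1) - v i) (v (i - 1) - v i)).toReal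
  if 0 < a then a else a + 2 * π

/-- A point `p` of `S` is an extreme point of the convex hull of `S` if it does not lie
in the convex hull of the other points of `S`. -/
def IsExtremePt (S : Set Plane) (p : Plane) : Prop :=
  p ∈ S ∧ p ∉ convexHull ℝ (S \ {p})

/-- The point of the plane with coordinates `(a, b)`. -/
def planePt (a b : ℝ) : Plane := WithLp.toLp 2 ![a, b]

lemma planeOrientation_areaForm (x y : Plane) : planeOrientation.areaForm x y = det2 x y := by
  have h := planeOrientation.volumeForm_robust (EuclideanSpace.basisFun (Fin 2) ℝ) rfl
  rw [Orientation.areaForm_to_volumeForm, h, Module.Basis.det_apply, Matrix.det_fin_two]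
  simp [Module.Basis.toMatrix, det2]; ring

lemma plane_inner (x y : Plane) : ⟪x, y⟫ = x 0 * y 0 + x 1 * y 1 := by
  simp [PiLp.inner_apply, Fin.sum_univ_two]; ring


lemma cramer_id (e f g : Plane) :
    det2 e f • g = det2 g f • e + det2 e g • f := by
  ext i
  fin_cases i <;>
    simp only [det2, PiLp.add_apply, PiLp.smul_apply, smul_eq_mul, Fin.mk_zero, Fin.mk_one,
      Fin.isValue] <;> ring

lemma mem_seg (A B : Plane) (t : ℝ) (h0 : 0 ≤ t) (h1 : t ≤ 1) :
    A + t • (B - A) ∈ segment ℝ A B := by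
  rw [segment_eq_image']
  exact ⟨t, ⟨h0, h1⟩, rfl⟩

lemma seg_cross {A B C D : Plane}
    (h1 : det2 (B - A) (C - A) * det2 (B - A) (D - A) < 0)
    (h2 : det2 (D - C) (A - C) * det2 (D - C) (B - C) < 0) :
    ¬ Disjoint (segment ℝ A B) (segment ℝ C D) := by
  set kC := det2 (B - A) (C - A) with hkC
  set kD := det2 (B - A) (D - A) with hkD
  set hA := det2 (D - C) (A - C) with hhA
  set hB := det2 (D - C) (B - C) with hhB
  have hden : kD - kC = hA - hB := by
    simp only [hkC, hkD, hhA, hhB, det2, PiLp.sub_apply]; ring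
  have hABden : hA - hB ≠ 0 := by
    intro h
    have : hA = hB := by linarith
    rw [this] at h2; nlinarith
  have hCDden : kC - kD ≠ 0 := by intro h; apply hABden; linarith
  set lam := hA / (hA - hB) with hlam
  set mu := kC / (kC - kD) with hmu
  have keyl : lam * (hA - hB) = hA := div_mul_cancel₀ _ hABden
  have keym : mu * (kC - kD) = kC := div_mul_cancel₀ _ hCDden
  have hlam01 : 0 ≤ lam ∧ lam ≤ 1 := by
    rcases mul_neg_iff.1 h2 with ⟨pa, pb⟩ | ⟨pa, pb⟩ <;>
      constructor <;> nlinarith [keyl]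
  have hmu01 : 0 ≤ mu ∧ mu ≤ 1 := by
    rcases mul_neg_iff.1 h1 with ⟨pa, pb⟩ | ⟨pa, pb⟩ <;>
      constructor <;> nlinarith [keym]
  rw [Set.not_disjoint_iff]
  refine ⟨A + lam • (B - A), mem_seg _ _ _ hlam01.1 hlam01.2, ?_⟩
  have hX : A + lam • (B - A) = C + mu • (D - C) := by
    have hcr := cramer_id (B - A) (D - C) (C - A)
    -- det2 (B-A) (D-C) = kD - kC ; det2 (C-A) (D-C) = hA ; det2 (B-A) (C-A) = kC
    have e1 : det2 (B - A) (D - C) = kD - kC := by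
      simp only [hkC, hkD, det2, PiLp.sub_apply]; ring
    have e2 : det2 (C - A) (D - C) = hA := by
      simp only [hhA, det2, PiLp.sub_apply]; ring
    rw [e1, e2, ← hkC] at hcr
    -- hcr : (kD - kC) • (C - A) = hA • (B - A) + kC • (D - C)
    have hne : kD - kC ≠ 0 := by rw [hden]; exact hABden
    -- multiply out
    have goal' : (kD - kC) • (A + lam • (B - A)) = (kD - kC) • (C + mu • (D - C)) := by
      have l1 : (kD - kC) • (lam • (B - A)) = hA • (B - A) := by
        rw [smul_smul]
        congr 1
        rw [hden, mul_comm]; exact keyl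
      have l2 : (kD - kC) • (mu • (D - C)) = (-kC) • (D - C) := by
        rw [smul_smul]
        congr 1
        nlinarith [keym]
      rw [smul_add, smul_add, l1, l2]
      linear_combination (norm := module) -hcr
    exact smul_right_injective Plane hne goal'
  rw [hX]
  exact mem_seg _ _ _ hmu01.1 hmu01.2

def uv (θ : ℝ) : Plane := planePt (Real.cos θ) (Real.sin θ)

lemma uv_apply0 (θ : ℝ) : uv θ 0 = Real.cos θ := rfl
lemma uv_apply1 (θ : ℝ) : uv θ 1 = Real.sin θ := rfl

lemma oangle_uv (α β : ℝ) :
    planeOrientation.oangle (uv α) (uv β) = ((β - α : ℝ) : Real.Angle) := by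
  unfold Orientation.oangle
  have hk : planeOrientation.kahler (uv α) (uv β)
      = Complex.ofReal (Real.cos (β - α)) + Complex.ofReal (Real.sin (β - α)) * Complex.I := by
    rw [Orientation.kahler_apply_apply, planeOrientation_areaForm, plane_inner]
    simp only [uv_apply0, uv_apply1, det2, uv, planePt]
    rw [Real.cos_sub, Real.sin_sub]
    push_cast
    ring_nf
    norm_num [Complex.ext_iff]
    ring
  rw [hk]
  have := Complex.arg_cos_add_sin_mul_I_coe_angle ((β - α : ℝ) : Real.Angle)
  rwa [Real.Angle.cos_coe, Real.Angle.sin_coe] at this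

section QQ
variable (o : Plane) (r : ℝ)

def Qp (θ : ℝ) : Plane := o + r • uv θ

lemma Qp_sub (α β : ℝ) (i : Fin 2) :
    (Qp o r β - Qp o r α) i = r * ((uv β) i - (uv α) i) := by
  simp only [Qp, PiLp.sub_apply, PiLp.add_apply, PiLp.smul_apply, smul_eq_mul]
  ring

lemma Qp_sub_o (α : ℝ) (i : Fin 2) :
    (Qp o r α - o) i = r * (uv α) i := by
  simp only [Qp, PiLp.sub_apply, PiLp.add_apply, PiLp.smul_apply, smul_eq_mul]
  ring

lemma d1 (α β γ : ℝ) :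
    det2 (Qp o r β - Qp o r α) (Qp o r γ - Qp o r α)
      = 4 * r ^ 2 * sin ((β - α)/2) * sin ((γ - β)/2) * sin ((γ - α)/2) := by
  have h : (γ - β)/2 = (γ + α)/2 - (β + α)/2 := by ring
  rw [det2, Qp_sub, Qp_sub, Qp_sub, Qp_sub, h, Real.sin_sub]
  show r * (cos β - cos α) * (r * (sin γ - sin α)) - r * (sin β - sin α) * (r * (cos γ - cos α)) = _
  rw [Real.cos_sub_cos, Real.sin_sub_sin, Real.sin_sub_sin, Real.cos_sub_cos]
  ring

lemma d2 (α β : ℝ) :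
    det2 (Qp o r β - Qp o r α) (o - Qp o r α) = r ^ 2 * sin (β - α) := by
  have e : ∀ i, (o - Qp o r α) i = r * (-(uv α) i) := by
    intro i
    simp only [Qp, PiLp.sub_apply, PiLp.add_apply, PiLp.smul_apply, smul_eq_mul]
    ring
  rw [det2, Qp_sub, Qp_sub, e, e, Real.sin_sub]
  show r * (cos β - cos α) * (r * -sin α) - r * (sin β - sin α) * (r * -cos α) = _
  ring

lemma d3 (ψ α : ℝ) :
    det2 (Qp o r ψ - o) (Qp o r α - o) = r ^ 2 * sin (α - ψ) := by
  rw [det2, Qp_sub_o, Qp_sub_o, Qp_sub_o, Qp_sub_o, Real.sin_sub]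
  show r * cos ψ * (r * sin α) - r * sin ψ * (r * cos α) = _
  ring

end QQ


lemma sin_half_pos {t : ℝ} (h0 : 0 < t) (h2 : t < 2 * π) : 0 < Real.sin (t / 2) :=
  Real.sin_pos_of_pos_of_lt_pi (by linarith) (by linarith)

lemma sin_half_neg {t : ℝ} (h0 : -(2 * π) < t) (h2 : t < 0) : Real.sin (t / 2) < 0 := by
  have := sin_half_pos (t := -t) (by linarith) (by linarith)
  rw [show -t / 2 = -(t/2) by ring, Real.sin_neg] at this
  linarith

lemma chord_cross (o : Plane) {r : ℝ} (hr : 0 < r) {a b c d : ℝ}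
    (hab : a < b) (hbc : b < c) (hcd : c < d) (hda : d < a + 2 * π) :
    ¬ Disjoint (segment ℝ (Qp o r a) (Qp o r c)) (segment ℝ (Qp o r b) (Qp o r d)) := by
  apply seg_cross
  · rw [d1 o r a c b, d1 o r a c d]
    have p1 := sin_half_pos (t := c - a) (by linarith) (by linarith)
    have n1 := sin_half_neg (t := b - c) (by linarith) (by linarith)
    have p2 := sin_half_pos (t := b - a) (by linarith) (by linarith)
    have p3 := sin_half_pos (t := d - c) (by linarith) (by linarith)
    have p4 := sin_half_pos (t := d - a) (by linarith) (by linarith)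
    have h4 : (0:ℝ) < 4 * r ^ 2 := by positivity
    exact mul_neg_of_neg_of_pos
      (mul_neg_of_neg_of_pos (mul_neg_of_pos_of_neg (mul_pos h4 p1) n1) p2)
      (mul_pos (mul_pos (mul_pos h4 p1) p3) p4)
  · rw [d1 o r b d a, d1 o r b d c]
    have p1 := sin_half_pos (t := d - b) (by linarith) (by linarith)
    have n1 := sin_half_neg (t := a - d) (by linarith) (by linarith)
    have n2 := sin_half_neg (t := a - b) (by linarith) (by linarith)
    have n3 := sin_half_neg (t := c - d) (by linarith) (by linarith)
    have p2 := sin_half_pos (t := c - b) (by linarith) (by linarith)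
    have h4 : (0:ℝ) < 4 * r ^ 2 := by positivity
    exact mul_neg_of_pos_of_neg
      (mul_pos_of_neg_of_neg (mul_neg_of_pos_of_neg (mul_pos h4 p1) n1) n2)
      (mul_neg_of_neg_of_pos (mul_neg_of_pos_of_neg (mul_pos h4 p1) n3) p2)

lemma chord_radius_cross (o : Plane) {r : ℝ} (hr : 0 < r) {a ψ c : ℝ}
    (h1 : a < ψ) (h2 : ψ < c) (h3 : c - a < π) :
    ¬ Disjoint (segment ℝ (Qp o r a) (Qp o r c)) (segment ℝ o (Qp o r ψ)) := by
  apply seg_cross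
  · rw [d2 o r a c, d1 o r a c ψ]
    have s1 : 0 < Real.sin (c - a) :=
      Real.sin_pos_of_pos_of_lt_pi (by linarith) (by linarith)
    have p1 := sin_half_pos (t := c - a) (by linarith) (by linarith [Real.pi_pos])
    have n1 := sin_half_neg (t := ψ - c) (by linarith [Real.pi_pos]) (by linarith)
    have p2 := sin_half_pos (t := ψ - a) (by linarith) (by linarith [Real.pi_pos])
    have h4 : (0:ℝ) < 4 * r ^ 2 := by positivity
    have hr2 : (0:ℝ) < r ^ 2 := by positivity
    exact mul_neg_of_pos_of_neg (mul_pos hr2 s1)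
      (mul_neg_of_neg_of_pos (mul_neg_of_pos_of_neg (mul_pos h4 p1) n1) p2)
  · rw [d3 o r ψ a, d3 o r ψ c]
    have s1 : Real.sin (a - ψ) < 0 := by
      have := Real.sin_pos_of_pos_of_lt_pi (x := ψ - a) (by linarith) (by linarith)
      rw [show a - ψ = -(ψ - a) by ring, Real.sin_neg]; linarith
    have s2 : 0 < Real.sin (c - ψ) :=
      Real.sin_pos_of_pos_of_lt_pi (by linarith) (by linarith)
    have hr2 : (0:ℝ) < r ^ 2 := by positivity
    exact mul_neg_of_neg_of_pos (mul_neg_of_pos_of_neg hr2 s1) (mul_pos hr2 s2)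

lemma Qp_period (o : Plane) (r θ : ℝ) : Qp o r (θ + 2 * π) = Qp o r θ := by
  unfold Qp uv planePt
  rw [Real.cos_add_two_pi, Real.sin_add_two_pi]

lemma Qp_injective (o : Plane) {r : ℝ} (hr : 0 < r) {θ θ' : ℝ}
    (h : Qp o r θ = Qp o r θ') : ∃ k : ℤ, θ - θ' = k * (2 * π) := by
  have hc : Real.cos θ = Real.cos θ' := by
    have := congrFun (congrArg WithLp.ofLp h) (0 : Fin 2)
    simp only [Qp, PiLp.add_apply, PiLp.smul_apply, smul_eq_mul, uv, planePt] at this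
    simp only [Matrix.cons_val_zero] at this
    exact mul_left_cancel₀ (ne_of_gt hr) (by linarith)
  have hs : Real.sin θ = Real.sin θ' := by
    have := congrFun (congrArg WithLp.ofLp h) (1 : Fin 2)
    simp only [Qp, PiLp.add_apply, PiLp.smul_apply, smul_eq_mul, uv, planePt] at this
    simp only [Matrix.cons_val_one, Matrix.head_cons, Matrix.cons_val_zero] at this
    exact mul_left_cancel₀ (ne_of_gt hr) (by linarith)
  have hexp : Complex.exp (θ * Complex.I) = Complex.exp (θ' * Complex.I) := by
    rw [Complex.exp_mul_I, Complex.exp_mul_I, ← Complex.ofReal_cos, ← Complex.ofReal_sin,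
      ← Complex.ofReal_cos, ← Complex.ofReal_sin, hc, hs]
  obtain ⟨k, hk⟩ := Complex.exp_eq_exp_iff_exists_int.mp hexp
  refine ⟨k, ?_⟩
  have hI : ((θ - θ' : ℝ) : ℂ) * Complex.I = (((k : ℝ) * (2 * π) : ℝ) : ℂ) * Complex.I := by
    push_cast
    linear_combination hk
  have := mul_right_cancel₀ Complex.I_ne_zero hI
  exact_mod_cast this

lemma zmod_cast_inj {n a b : ℕ} (ha : a < n) (hb : b < n) (h : (a : ZMod n) = b) : a = b := by
  haveI : NeZero n := ⟨by omega⟩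
  have := congrArg ZMod.val h
  rwa [ZMod.val_natCast_of_lt ha, ZMod.val_natCast_of_lt hb] at this

lemma exists_adjacent_flip (g : ℕ → Bool) {a b : ℕ} (hab : a ≤ b) (hg : g a ≠ g b) :
    ∃ s, a ≤ s ∧ s < b ∧ g s ≠ g (s + 1) := by
  by_contra hcon
  push_neg at hcon
  apply hg
  clear hg
  induction b, hab using Nat.le_induction with
  | base => rfl
  | succ b hab ih =>
    have : g b = g (b+1) := by
      by_cases hb : a ≤ b
      · exact hcon b hb (by omega)
      · omega
    rw [← this]
    exact ih (fun s hs hs' => hcon s hs (by omega))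

lemma sum_range_zmod {n : ℕ} [NeZero n] (F : ZMod n → ℝ) :
    ∑ i ∈ Finset.range n, F (i : ZMod n) = ∑ i : ZMod n, F i := by
  refine Finset.sum_nbij' (fun t => (t : ZMod n)) (fun i : ZMod n => i.val) ?_ ?_ ?_ ?_ ?_
  · intro a _; exact Finset.mem_univ _
  · intro a _; exact Finset.mem_range.2 (ZMod.val_lt a)
  · intro a ha; exact ZMod.val_natCast_of_lt (Finset.mem_range.1 ha)
  · intro a _; exact ZMod.natCast_rightInverse a
  · intro a _; rfl

lemma det2_translate {n : ℕ} [NeZero n] (v : ZMod n → Plane) (o : Plane) :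
    ∑ i : ZMod n, det2 (v i) (v (i + 1)) = ∑ i : ZMod n, det2 (v i - o) (v (i + 1) - o) := by
  have expand : ∀ p q : Plane, det2 (p - o) (q - o) =
      det2 p q - det2 p o + det2 q o := by
    intro p q; simp only [det2, PiLp.sub_apply]; ring
  have h1 : ∑ i : ZMod n, det2 (v i) o = ∑ i : ZMod n, det2 (v (i + 1)) o :=
    Fintype.sum_equiv (Equiv.addRight (-1 : ZMod n)) (fun i => det2 (v i) o)
      (fun i => det2 (v (i + 1)) o) (fun i => by simp)
  rw [Finset.sum_congr rfl (fun i _ => expand (v i) (v (i + 1))),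
    Finset.sum_add_distrib, Finset.sum_sub_distrib, ← h1]
  ring

lemma cast_lt_ne {n a b : ℕ} (ha : a < n) (hb : b < n) (hab : a ≠ b) :
    (a : ZMod n) ≠ (b : ZMod n) := fun h => hab (zmod_cast_inj ha hb h)

lemma edge_disjoint {n : ℕ} (v : ZMod n → Plane)
    (hdisj : ∀ i j : ZMod n, i ≠ j → i + 1 ≠ j → j + 1 ≠ i →
      Disjoint (segment ℝ (v i) (v (i + 1))) (segment ℝ (v j) (v (j + 1))))
    (i0 : ZMod n) {a b : ℕ} (ha : a + 1 < n) (hb : b + 1 < n)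
    (h1 : a ≠ b) (h2 : a + 1 ≠ b) (h3 : b + 1 ≠ a) :
    Disjoint (segment ℝ (v (i0 + 1 + (a : ZMod n))) (v (i0 + 1 + ((a + 1 : ℕ) : ZMod n))))
      (segment ℝ (v (i0 + 1 + (b : ZMod n))) (v (i0 + 1 + ((b + 1 : ℕ) : ZMod n)))) := by
  have e1 : ∀ c : ℕ, (i0 + 1 + (c : ZMod n)) + 1 = i0 + 1 + ((c + 1 : ℕ) : ZMod n) := by
    intro c; push_cast; ring
  have d := hdisj (i0 + 1 + (a : ZMod n)) (i0 + 1 + (b : ZMod n))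
    (by intro h; exact cast_lt_ne (by omega) (by omega) h1 (add_left_cancel h))
    (by rw [e1]; intro h; exact cast_lt_ne ha (by omega) h2 (add_left_cancel h))
    (by rw [e1]; intro h; exact cast_lt_ne hb (by omega) h3 (add_left_cancel h))
  rwa [e1, e1] at d

lemma edge0_disjoint {n : ℕ} (v : ZMod n → Plane)
    (hdisj : ∀ i j : ZMod n, i ≠ j → i + 1 ≠ j → j + 1 ≠ i →
      Disjoint (segment ℝ (v i) (v (i + 1))) (segment ℝ (v j) (v (j + 1))))
    (i0 : ZMod n) {b : ℕ} (hb : b + 2 < n) (h1 : 1 ≤ b) :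
    Disjoint (segment ℝ (v i0) (v (i0 + 1)))
      (segment ℝ (v (i0 + 1 + (b : ZMod n))) (v (i0 + 1 + ((b + 1 : ℕ) : ZMod n)))) := by
  have e1 : ∀ c : ℕ, (i0 + 1 + (c : ZMod n)) + 1 = i0 + 1 + ((c + 1 : ℕ) : ZMod n) := by
    intro c; push_cast; ring
  have e0 : i0 + 1 = i0 + 1 + ((0 : ℕ) : ZMod n) := by push_cast; ring
  have d := hdisj i0 (i0 + 1 + (b : ZMod n))
    (by
      intro h
      have : (i0 + 1 + ((0:ℕ) : ZMod n)) = i0 + 1 + ((b+1 : ℕ) : ZMod n) := by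
        push_cast
        push_cast at h
        linear_combination h
      exact cast_lt_ne (by omega) (by omega) (by omega) (add_left_cancel this))
    (by
      intro h
      have : i0 + ((1 : ℕ) : ZMod n) = i0 + ((b + 1 : ℕ) : ZMod n) := by
        push_cast
        push_cast at h
        linear_combination h
      exact cast_lt_ne (a := 1) (b := b + 1) (by omega) (by omega) (by omega)
        (add_left_cancel this))
    (by
      intro h
      have : i0 + ((b + 2 : ℕ) : ZMod n) = i0 + ((0 : ℕ) : ZMod n) := by
        push_cast
        push_cast at h
        linear_combination h
      exact cast_lt_ne (a := b + 2) (b := 0) (by omega) (by omega) (by omega)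
        (add_left_cancel this))
  rwa [e1] at d

lemma separation {n m : ℕ} (hm : 3 ≤ m) (hmn : m + 1 = n)
    (o : Plane) {r : ℝ} (hr : 0 < r)
    (v : ZMod n → Plane) (hinj : Function.Injective v)
    (hdisj : ∀ i j : ZMod n, i ≠ j → i + 1 ≠ j → j + 1 ≠ i →
      Disjoint (segment ℝ (v i) (v (i + 1))) (segment ℝ (v j) (v (j + 1))))
    (i0 : ZMod n) (θ0 ε : ℝ) (hε : ε = 1 ∨ ε = -1) (P : ℕ → ℕ)
    (hPlt : ∀ t, t < m → P t < m)
    (hPv : ∀ t, t < m → v (i0 + 1 + (t : ZMod n)) =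
      Qp o r (θ0 + ε * (P t : ℝ) * (2 * π / (m : ℝ))))
    (t q : ℕ) (hpre : ∀ s, s ≤ t → P s = s) (ht1 : t + 1 < m)
    (hq : P (t + 1) = q) (hq1 : t + 2 ≤ q) (hq2 : q + 2 ≤ m) : False := by
  have hmR : (0:ℝ) < (m:ℝ) := by exact_mod_cast (by omega : 0 < m)
  set x := 2 * π / (m : ℝ) with hx
  have hxpos : 0 < x := by
    rw [hx]; positivity
  have hmx : (m:ℝ) * x = 2 * π := by rw [hx]; field_simp
  -- injectivity of P below m
  have hPinj : ∀ {a b : ℕ}, a < m → b < m → P a = P b → a = b := by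
    intro a b ha hb hab
    have hva := hPv a ha
    have hvb := hPv b hb
    rw [hab] at hva
    have h2 := hinj (hva.trans hvb.symm)
    exact zmod_cast_inj (by omega) (by omega) (add_left_cancel h2)
  -- surjectivity of P below m
  have hPsurj : ∀ j, j < m → ∃ s, s < m ∧ P s = j := by
    have hsub : Finset.image P (Finset.range m) ⊆ Finset.range m := by
      intro j hj
      obtain ⟨s, hs, rfl⟩ := Finset.mem_image.1 hj
      exact Finset.mem_range.2 (hPlt s (Finset.mem_range.1 hs))
    have hcard : (Finset.range m).card ≤ (Finset.image P (Finset.range m)).card := by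
      rw [Finset.card_image_of_injOn
        (fun a ha b hb h => hPinj (Finset.mem_range.1 ha) (Finset.mem_range.1 hb) h)]
    have heq := Finset.eq_of_subset_of_card_le hsub hcard
    intro j hj
    have : j ∈ Finset.image P (Finset.range m) := by rw [heq]; exact Finset.mem_range.2 hj
    obtain ⟨s, hs, hsj⟩ := Finset.mem_image.1 this
    exact ⟨s, Finset.mem_range.1 hs, hsj⟩
  -- values at times ≥ t+2 are ≥ t+1 and ≠ q
  have hlate : ∀ s, t + 2 ≤ s → s < m → t + 1 ≤ P s ∧ P s ≠ q := by
    intro s hs2 hsm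
    constructor
    · by_contra hc
      push_neg at hc
      have : P (P s) = P s := hpre (P s) (by omega)
      have := hPinj (by omega) hsm this
      omega
    · intro hc
      rw [← hq] at hc
      have := hPinj hsm ht1 hc
      omega
  -- find times realizing both sides
  obtain ⟨sA, hsAm, hsA⟩ := hPsurj (t + 1) (by omega)
  obtain ⟨sB, hsBm, hsB⟩ := hPsurj (m - 1) (by omega)
  have hsA2 : t + 2 ≤ sA := by
    rcases Nat.lt_or_ge sA (t + 1) with h' | h'
    · have := hpre sA (by omega); omega
    · rcases Nat.eq_or_lt_of_le h' with h'' | h''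
      · rw [← h'', hq] at hsA; omega
      · omega
  have hsB2 : t + 2 ≤ sB := by
    rcases Nat.lt_or_ge sB (t + 1) with h' | h'
    · have := hpre sB (by omega); omega
    · rcases Nat.eq_or_lt_of_le h' with h'' | h''
      · rw [← h'', hq] at hsB; omega
      · omega
  -- find adjacent flip
  have key : ∃ s, t + 2 ≤ s ∧ s + 1 < m ∧
      ((P s < q ∧ q < P (s + 1)) ∨ (P (s + 1) < q ∧ q < P s)) := by
    have hgA : (fun s => decide (P s < q)) sA = true := by simp [hsA]; omega
    have hgB : (fun s => decide (P s < q)) sB = false := by simp [hsB]; omega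
    have hconv : ∀ s, t + 2 ≤ s → s + 1 < m →
        (decide (P s < q) ≠ decide (P (s + 1) < q)) →
        (P s < q ∧ q < P (s + 1)) ∨ (P (s + 1) < q ∧ q < P s) := by
      intro s hs2 hs1 hd
      have l1 := hlate s hs2 (by omega)
      have l2 := hlate (s + 1) (by omega) (by omega)
      by_cases hcase : P s < q
      · left
        refine ⟨hcase, ?_⟩
        have : ¬ (P (s+1) < q) := by
          intro hc; apply hd; simp [hcase, hc]
        omega
      · right
        have : (P (s+1) < q) := by
          by_contra hc; apply hd; simp [hcase, hc]
        refine ⟨this, by omega⟩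
    rcases le_total sA sB with hAB | hAB
    · obtain ⟨s, h1, h2, h3⟩ := exists_adjacent_flip (fun s => decide (P s < q)) hAB
        (by rw [show decide (P sA < q) = true from hgA, show decide (P sB < q) = false from hgB]; simp)
      exact ⟨s, by omega, by omega, hconv s (by omega) (by omega) h3⟩
    · obtain ⟨s, h1, h2, h3⟩ := exists_adjacent_flip (fun s => decide (P s < q)) hAB
        (by rw [show decide (P sA < q) = true from hgA, show decide (P sB < q) = false from hgB]; simp)
      exact ⟨s, by omega, by omega, hconv s (by omega) (by omega) h3⟩
  obtain ⟨s, hs2, hs1m, hside⟩ := key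
  -- the two edges
  have hvt : v (i0 + 1 + (t : ZMod n)) = Qp o r (θ0 + ε * (t:ℝ) * x) := by
    have := hPv t (by omega)
    rwa [hpre t le_rfl] at this
  have hvt1 : v (i0 + 1 + ((t + 1 : ℕ) : ZMod n)) = Qp o r (θ0 + ε * (q:ℝ) * x) := by
    have := hPv (t + 1) (by omega)
    rwa [hq] at this
  have hvs : v (i0 + 1 + (s : ZMod n)) = Qp o r (θ0 + ε * (P s : ℝ) * x) :=
    hPv s (by omega)
  have hvs1 : v (i0 + 1 + ((s + 1 : ℕ) : ZMod n)) = Qp o r (θ0 + ε * (P (s+1) : ℝ) * x) :=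
    hPv (s + 1) (by omega)
  have hdis := edge_disjoint v hdisj i0 (a := t) (b := s) (by omega) (by omega)
    (by omega) (by omega) (by omega)
  rw [hvt, hvt1, hvs, hvs1] at hdis
  -- now contradiction with chord_cross, by cases on ε and side
  have hlateS := hlate s hs2 (by omega)
  have hlateS1 := hlate (s + 1) (by omega) (by omega)
  have hPsm := hPlt s (by omega)
  have hPs1m := hPlt (s + 1) (by omega)
  have step : ∀ {a b : ℕ}, a < b → (a:ℝ) * x < (b:ℝ) * x := by
    intro a b h
    exact mul_lt_mul_of_pos_right (by exact_mod_cast h) hxpos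
  have hlt2pi : ∀ {a : ℕ}, a < m → (a:ℝ) * x < 2 * π := by
    intro a h
    have := step h
    rwa [hmx] at this
  have htx0 : (0:ℝ) ≤ (t:ℝ) * x := by positivity
  rcases hε with hε1 | hε1 <;> rcases hside with ⟨hu, hw⟩ | ⟨hu, hw⟩
  · -- ε = 1, P s < q < P (s+1)
    refine chord_cross o hr (a := θ0 + ε * (t:ℝ) * x) (b := θ0 + ε * (P s : ℝ) * x)
      (c := θ0 + ε * (q:ℝ) * x) (d := θ0 + ε * (P (s+1) : ℝ) * x)
      ?_ ?_ ?_ ?_ hdis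
    · have := step (show t < P s by omega); rw [hε1]; linarith
    · have := step hu; rw [hε1]; linarith
    · have := step hw; rw [hε1]; linarith
    · have := hlt2pi hPs1m; rw [hε1]; linarith
  · -- ε = 1, P (s+1) < q < P s
    rw [segment_symm ℝ (Qp o r (θ0 + ε * (P s : ℝ) * x)) (Qp o r (θ0 + ε * (P (s+1) : ℝ) * x))]
      at hdis
    refine chord_cross o hr (a := θ0 + ε * (t:ℝ) * x) (b := θ0 + ε * (P (s+1) : ℝ) * x)
      (c := θ0 + ε * (q:ℝ) * x) (d := θ0 + ε * (P s : ℝ) * x)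
      ?_ ?_ ?_ ?_ hdis
    · have := step (show t < P (s+1) by omega); rw [hε1]; linarith
    · have := step hu; rw [hε1]; linarith
    · have := step hw; rw [hε1]; linarith
    · have := hlt2pi hPsm; rw [hε1]; linarith
  · -- ε = -1, P s < q < P (s+1)
    rw [segment_symm ℝ (Qp o r (θ0 + ε * (P s : ℝ) * x)) (Qp o r (θ0 + ε * (P (s+1) : ℝ) * x))]
      at hdis
    rw [segment_symm ℝ (Qp o r (θ0 + ε * (t : ℝ) * x)) (Qp o r (θ0 + ε * (q : ℝ) * x))]
      at hdis
    refine chord_cross o hr (a := θ0 + ε * (P (s+1) : ℝ) * x) (b := θ0 + ε * (q : ℝ) * x)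
      (c := θ0 + ε * (P s : ℝ) * x) (d := θ0 + ε * (t : ℝ) * x)
      ?_ ?_ ?_ ?_ hdis.symm
    · have := step hw; rw [hε1]; linarith
    · have := step hu; rw [hε1]; linarith
    · have := step (show t < P s by omega); rw [hε1]; linarith
    · have := hlt2pi hPs1m; rw [hε1]; linarith
  · -- ε = -1, P (s+1) < q < P s
    rw [segment_symm ℝ (Qp o r (θ0 + ε * (t : ℝ) * x)) (Qp o r (θ0 + ε * (q : ℝ) * x))]
      at hdis
    refine chord_cross o hr (a := θ0 + ε * (P s : ℝ) * x) (b := θ0 + ε * (q : ℝ) * x)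
      (c := θ0 + ε * (P (s+1) : ℝ) * x) (d := θ0 + ε * (t : ℝ) * x)
      ?_ ?_ ?_ ?_ hdis.symm
    · have := step hw; rw [hε1]; linarith
    · have := step hu; rw [hε1]; linarith
    · have := step (show t < P (s+1) by omega); rw [hε1]; linarith
    · have := hlt2pi hPsm; rw [hε1]; linarith

lemma Qp_period' (o : Plane) (r θ : ℝ) : Qp o r (θ - 2 * π) = Qp o r θ := by
  have := Qp_period o r (θ - 2 * π)
  rw [sub_add_cancel] at this
  exact this.symm

lemma wall {n m : ℕ} (hm : 3 ≤ m) (hmn : m + 1 = n) (hodd : Odd m)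
    (o : Plane) {r : ℝ} (hr : 0 < r)
    (v : ZMod n → Plane) (hinj : Function.Injective v)
    (hdisj : ∀ i j : ZMod n, i ≠ j → i + 1 ≠ j → j + 1 ≠ i →
      Disjoint (segment ℝ (v i) (v (i + 1))) (segment ℝ (v j) (v (j + 1))))
    (i0 : ZMod n) (hi0 : v i0 = o) (θ0 ε : ℝ) (hε : ε = 1 ∨ ε = -1) (P : ℕ → ℕ)
    (hPlt : ∀ t, t < m → P t < m)
    (hPv : ∀ t, t < m → v (i0 + 1 + (t : ZMod n)) =
      Qp o r (θ0 + ε * (P t : ℝ) * (2 * π / (m : ℝ))))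
    (t : ℕ) (ht : 1 ≤ t) (htm : t + 3 ≤ m)
    (hpre : ∀ s, s ≤ t → P s = s) (hq : P (t + 1) = m - 1) : False := by
  have hmR : (0:ℝ) < (m:ℝ) := by exact_mod_cast (by omega : 0 < m)
  set x := 2 * π / (m : ℝ) with hx
  have hxpos : 0 < x := by rw [hx]; positivity
  have hmx : (m:ℝ) * x = 2 * π := by rw [hx]; field_simp
  have hM1 : ((m - 1 : ℕ) : ℝ) = (m : ℝ) - 1 := by
    have : 1 ≤ m := by omega
    push_cast [this]
    ring
  have hPinj : ∀ {a b : ℕ}, a < m → b < m → P a = P b → a = b := by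
    intro a b ha hb hab
    have hva := hPv a ha
    have hvb := hPv b hb
    rw [hab] at hva
    have h2 := hinj (hva.trans hvb.symm)
    exact zmod_cast_inj (by omega) (by omega) (add_left_cancel h2)
  set pb := P (m - 1) with hpb
  have hpbm : pb < m := hPlt (m - 1) (by omega)
  have hpb1 : t + 1 ≤ pb := by
    by_contra hc
    push_neg at hc
    have h1 : P pb = pb := hpre pb (by omega)
    have h2 : pb = m - 1 := hPinj (by omega) (by omega) (h1.trans hpb)
    omega
  have hpb2 : pb + 2 ≤ m := by
    by_contra hc
    push_neg at hc
    have hpbe : pb = m - 1 := by omega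
    have h1 : P (t + 1) = P (m - 1) := by
      rw [hq, ← hpb, hpbe]
    have := hPinj (by omega) (by omega) h1
    omega
  have step : ∀ {a b : ℕ}, a < b → (a:ℝ) * x < (b:ℝ) * x := by
    intro a b h
    exact mul_lt_mul_of_pos_right (by exact_mod_cast h) hxpos
  -- values
  have hv1 : v (i0 + 1) = Qp o r θ0 := by
    have h0 := hPv 0 (by omega)
    rw [hpre 0 (by omega)] at h0
    have e : i0 + 1 + ((0:ℕ) : ZMod n) = i0 + 1 := by push_cast; ring
    rw [e] at h0
    rw [h0]
    congr 1
    push_cast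
    ring
  have hvt : v (i0 + 1 + (t : ZMod n)) = Qp o r (θ0 + ε * (t:ℝ) * x) := by
    have := hPv t (by omega)
    rwa [hpre t le_rfl] at this
  have hvt1 : v (i0 + 1 + ((t + 1 : ℕ) : ZMod n)) = Qp o r (θ0 + ε * ((m:ℝ) - 1) * x) := by
    have := hPv (t + 1) (by omega)
    rw [hq, hM1] at this
    exact this
  have hvlast : v (i0 + 1 + ((m - 1 : ℕ) : ZMod n)) = Qp o r (θ0 + ε * (pb:ℝ) * x) := by
    have := hPv (m - 1) (by omega)
    rw [← hpb] at this
    exact this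
  have hilast : i0 + 1 + (((m - 1) + 1 : ℕ) : ZMod n) = i0 := by
    have : ((m - 1) + 1 : ℕ) = n - 1 := by omega
    rw [this]
    have hn1 : ((n - 1 : ℕ) : ZMod n) = (n : ZMod n) - 1 := by
      push_cast [show 1 ≤ n by omega]
      ring
    rw [hn1, ZMod.natCast_self]
    ring
  rcases Nat.lt_trichotomy (2 * (t + 1)) m with hcase | hcase | hcase
  · -- thin side: chord crosses radius [o, Qp θ0]
    have hdis := edge0_disjoint v hdisj i0 (b := t) (by omega) ht
    rw [hi0, hv1, hvt, hvt1] at hdis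
    have hwrap : Qp o r (θ0 + ε * ((m:ℝ) - 1) * x) = Qp o r (θ0 - ε * x) := by
      rcases hε with h | h
      · rw [h, show θ0 + 1 * ((m:ℝ) - 1) * x = (θ0 - 1 * x) + 2 * π by rw [← hmx]; ring]
        rw [show θ0 - (1:ℝ) * x = θ0 - x by ring]
        exact Qp_period o r _
      · rw [h, show θ0 - (-1:ℝ) * x = θ0 + x by ring,
          show θ0 + (-1) * ((m:ℝ) - 1) * x = (θ0 + x) - 2 * π by rw [← hmx]; ring]
        exact Qp_period' o r _
    rw [hwrap] at hdis
    have harc : ((t:ℝ) + 1) * x < π := by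
      have h2 : ((2 * (t + 1) : ℕ):ℝ) * x < (m:ℝ) * x := step hcase
      rw [hmx] at h2
      push_cast at h2
      linarith
    have htxpos : (0:ℝ) < (t:ℝ) * x :=
      mul_pos (by exact_mod_cast (by omega : 0 < t)) hxpos
    rcases hε with h | h
    · have e1 : θ0 + ε * (t:ℝ) * x = θ0 + (t:ℝ) * x := by rw [h]; ring
      have e2 : θ0 - ε * x = θ0 - x := by rw [h]; ring
      rw [e1, e2] at hdis
      have hcc := chord_radius_cross o hr (a := θ0 - x) (ψ := θ0) (c := θ0 + (t:ℝ) * x)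
        (by linarith) (by linarith) (by linarith)
      rw [segment_symm ℝ (Qp o r (θ0 + (t:ℝ) * x)) (Qp o r (θ0 - x))] at hdis
      exact hcc hdis.symm
    · have e1 : θ0 + ε * (t:ℝ) * x = θ0 - (t:ℝ) * x := by rw [h]; ring
      have e2 : θ0 - ε * x = θ0 + x := by rw [h]; ring
      rw [e1, e2] at hdis
      have hcc := chord_radius_cross o hr (a := θ0 - (t:ℝ) * x) (ψ := θ0) (c := θ0 + x)
        (by linarith) (by linarith) (by linarith)
      exact hcc hdis.symm
  · obtain ⟨k, hk⟩ := hodd; omega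
  · -- far side: chord crosses radius [o, Qp (θ0 + ε pb x)]
    have hdis := edge_disjoint v hdisj i0 (a := m - 1) (b := t) (by omega) (by omega)
      (by omega) (by omega) (by omega)
    rw [hilast, hi0, hvlast, hvt, hvt1] at hdis
    have harc2 : ((m:ℝ) - 1 - (t:ℝ)) * x < π := by
      have hcast : ((m - 1 - t : ℕ) : ℝ) = (m:ℝ) - 1 - (t:ℝ) := by
        rw [Nat.cast_sub (by omega : t ≤ m - 1), Nat.cast_sub (by omega : 1 ≤ m)]
        push_cast
        ring
      have h2 : ((2 * (m - 1 - t) : ℕ):ℝ) * x < (m:ℝ) * x := step (by omega)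
      rw [hmx] at h2
      rw [show ((2 * (m - 1 - t) : ℕ):ℝ) = 2 * ((m:ℝ) - 1 - (t:ℝ)) by
        rw [Nat.cast_mul, hcast]; push_cast; ring] at h2
      linarith
    have hst : (t:ℝ) * x < (pb:ℝ) * x := step (by omega)
    have hsp : (pb:ℝ) * x < ((m:ℝ) - 1) * x := by
      have := step (show pb < m - 1 by omega)
      rwa [hM1] at this
    rcases hε with h | h
    · have e1 : θ0 + ε * (t:ℝ) * x = θ0 + (t:ℝ) * x := by rw [h]; ring
      have e2 : θ0 + ε * ((m:ℝ) - 1) * x = θ0 + ((m:ℝ) - 1) * x := by rw [h]; ring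
      have e3 : θ0 + ε * (pb:ℝ) * x = θ0 + (pb:ℝ) * x := by rw [h]; ring
      rw [e1, e2, e3] at hdis
      have hcc := chord_radius_cross o hr (a := θ0 + (t:ℝ) * x) (ψ := θ0 + (pb:ℝ) * x)
        (c := θ0 + ((m:ℝ) - 1) * x) (by linarith) (by linarith) (by linarith)
      rw [segment_symm ℝ (Qp o r (θ0 + (pb:ℝ) * x)) o] at hdis
      exact hcc hdis.symm
    · have e1 : θ0 + ε * (t:ℝ) * x = θ0 - (t:ℝ) * x := by rw [h]; ring
      have e2 : θ0 + ε * ((m:ℝ) - 1) * x = θ0 - ((m:ℝ) - 1) * x := by rw [h]; ring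
      have e3 : θ0 + ε * (pb:ℝ) * x = θ0 - (pb:ℝ) * x := by rw [h]; ring
      rw [e1, e2, e3] at hdis
      have hcc := chord_radius_cross o hr (a := θ0 - ((m:ℝ) - 1) * x) (ψ := θ0 - (pb:ℝ) * x)
        (c := θ0 - (t:ℝ) * x) (by linarith) (by linarith) (by linarith)
      rw [segment_symm ℝ (Qp o r (θ0 - (pb:ℝ) * x)) o] at hdis
      rw [segment_symm ℝ (Qp o r (θ0 - (t:ℝ) * x)) (Qp o r (θ0 - ((m:ℝ) - 1) * x))] at hdis
      exact hcc hdis.symm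

lemma path_mono {n m : ℕ} (hm : 3 ≤ m) (hmn : m + 1 = n) (hodd : Odd m)
    (o : Plane) {r : ℝ} (hr : 0 < r)
    (v : ZMod n → Plane) (hinj : Function.Injective v)
    (hdisj : ∀ i j : ZMod n, i ≠ j → i + 1 ≠ j → j + 1 ≠ i →
      Disjoint (segment ℝ (v i) (v (i + 1))) (segment ℝ (v j) (v (j + 1))))
    (i0 : ZMod n) (hi0 : v i0 = o) (θ0 ε : ℝ) (hε : ε = 1 ∨ ε = -1) (P : ℕ → ℕ)
    (hPlt : ∀ t, t < m → P t < m)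
    (hPv : ∀ t, t < m → v (i0 + 1 + (t : ZMod n)) =
      Qp o r (θ0 + ε * (P t : ℝ) * (2 * π / (m : ℝ))))
    (hP0 : P 0 = 0) (hP1 : P 1 = 1) :
    ∀ t, t < m → P t = t := by
  have hPinj : ∀ {a b : ℕ}, a < m → b < m → P a = P b → a = b := by
    intro a b ha hb hab
    have hva := hPv a ha
    have hvb := hPv b hb
    rw [hab] at hva
    have h2 := hinj (hva.trans hvb.symm)
    exact zmod_cast_inj (by omega) (by omega) (add_left_cancel h2)
  intro t
  induction t using Nat.strong_induction_on with
  | _ t ih =>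
    intro htm
    rcases t with _ | t'
    · exact hP0
    rcases t' with _ | t2
    · exact hP1
    -- t = t2 + 2
    have hpre : ∀ s, s ≤ t2 + 1 → P s = s := fun s hs => ih s (by omega) (by omega)
    have hqm : P (t2 + 2) < m := hPlt _ htm
    have hqlow : t2 + 2 ≤ P (t2 + 2) := by
      by_contra hc
      push_neg at hc
      have h1 : P (P (t2 + 2)) = P (t2 + 2) := hpre _ (by omega)
      have := hPinj htm (by omega) h1.symm
      omega
    rcases Nat.eq_or_lt_of_le hqlow with heq | hlt
    · exact heq.symm
    rcases Nat.lt_or_ge (P (t2 + 2) + 2) (m + 1) with hsep | hwall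
    · exact (separation hm hmn o hr v hinj hdisj i0 θ0 ε hε P hPlt hPv
        (t2 + 1) (P (t2 + 2)) hpre (by omega) rfl (by omega) (by omega)).elim
    · have hqe : P (t2 + 2) = m - 1 := by omega
      have := wall hm hmn hodd o hr v hinj hdisj i0 hi0 θ0 ε hε P hPlt hPv
        (t2 + 1) (by omega) (by omega) hpre hqe
      exact this.elim

lemma R_inj {m : ℕ} (hm : 3 ≤ m) (o : Plane) {r : ℝ} (hr : 0 < r) (θ0 ε : ℝ)
    (hε : ε = 1 ∨ ε = -1) {a b : ℕ} (ha : a < m) (hb : b < m)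
    (h : Qp o r (θ0 + ε * (a:ℝ) * (2 * π / (m:ℝ))) = Qp o r (θ0 + ε * (b:ℝ) * (2 * π / (m:ℝ)))) :
    a = b := by
  have hmne : (m:ℝ) ≠ 0 := by positivity
  have hpi : (0:ℝ) < π := Real.pi_pos
  obtain ⟨kk, hkk⟩ := Qp_injective o hr h
  have h2 : ε * ((a:ℝ) - b) * (2 * π / m) = kk * (2 * π) := by linear_combination hkk
  have h3 : ε * ((a:ℝ) - b) = kk * m := by
    have h4 : ε * ((a:ℝ) - b) * (2 * π) = kk * m * (2 * π) := by
      field_simp at h2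
      linear_combination (2 * π) * h2
    have h5 : (2 * π : ℝ) ≠ 0 := by positivity
    exact mul_right_cancel₀ h5 h4
  have hZ : ((a:ℤ) - b = kk * m) ∨ ((a:ℤ) - b = -(kk * m)) := by
    rcases hε with he | he
    · left
      rw [he, one_mul] at h3
      exact_mod_cast h3
    · right
      rw [he] at h3
      have : ((a:ℝ) - b) = -(kk * m) := by linarith
      exact_mod_cast this
  have haZ : (a:ℤ) < m := by exact_mod_cast ha
  have hbZ : (b:ℤ) < m := by exact_mod_cast hb
  have ha0 : (0:ℤ) ≤ (a:ℤ) := Int.ofNat_nonneg a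
  have hb0 : (0:ℤ) ≤ (b:ℤ) := Int.ofNat_nonneg b
  have hmZ : (3:ℤ) ≤ m := by exact_mod_cast hm
  have hk0 : kk = 0 := by
    rcases lt_trichotomy kk 0 with hk | hk | hk
    · have : kk ≤ -1 := by omega
      have h6 : kk * m ≤ -m := by nlinarith
      rcases hZ with h7 | h7 <;> omega
    · exact hk
    · have : 1 ≤ kk := by omega
      have h6 : (m:ℤ) ≤ kk * m := by nlinarith
      rcases hZ with h7 | h7 <;> omega
  rw [hk0] at hZ
  simp at hZ
  omega

lemma Qp_period_nat (o : Plane) (r θ : ℝ) (j : ℕ) :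
    Qp o r (θ + (j:ℝ) * (2 * π)) = Qp o r θ := by
  induction j with
  | zero => norm_num
  | succ j ih =>
    have : θ + ((j+1:ℕ):ℝ) * (2*π) = (θ + (j:ℝ)*(2*π)) + 2*π := by push_cast; ring
    rw [this, Qp_period, ih]

lemma Qp_mod {m : ℕ} (hm : 1 ≤ m) (o : Plane) (r : ℝ) (a : ℕ) :
    Qp o r ((a:ℝ) * (2 * π / (m:ℝ))) = Qp o r (((a % m : ℕ):ℝ) * (2 * π / (m:ℝ))) := by
  have hmne : (m:ℝ) ≠ 0 := by positivity
  have hdecomp : a = m * (a / m) + a % m := (Nat.div_add_mod a m).symm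
  have : (a:ℝ) * (2 * π / (m:ℝ))
      = ((a % m : ℕ):ℝ) * (2 * π / (m:ℝ)) + ((a / m : ℕ):ℝ) * (2 * π) := by
    rw [show (a:ℝ) = ((m * (a / m) + a % m : ℕ) : ℝ) from by exact_mod_cast hdecomp]
    push_cast
    field_simp
    ring
  rw [this, Qp_period_nat]

lemma mod_eq_helper {m ka k : ℕ} (hka : ka < m) (hk : k < m) :
    (ka + (k + m - ka) % m) % m = k := by
  calc (ka + (k + m - ka) % m) % m
      = ((ka % m) + ((k + m - ka) % m % m)) % m := Nat.add_mod _ _ _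
    _ = ((ka % m) + ((k + m - ka) % m)) % m := by rw [Nat.mod_mod_of_dvd _ dvd_rfl]
    _ = (ka + (k + m - ka)) % m := (Nat.add_mod _ _ _).symm
    _ = (k + m) % m := by congr 1; omega
    _ = k % m := Nat.add_mod_right _ _
    _ = k := Nat.mod_eq_of_lt hk

lemma pos_exists {m : ℕ} (hm : 3 ≤ m) (o : Plane) (r : ℝ) {ka : ℕ} (hka : ka < m)
    (ε : ℝ) (hε : ε = 1 ∨ ε = -1) {k : ℕ} (hk : k < m) :
    ∃ j : ℕ, j < m ∧ Qp o r ((k:ℝ) * (2 * π / (m:ℝ)))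
      = Qp o r ((ka:ℝ) * (2 * π / (m:ℝ)) + ε * (j:ℝ) * (2 * π / (m:ℝ))) := by
  have hmne : (m:ℝ) ≠ 0 := by positivity
  have hmx : (m:ℝ) * (2 * π / (m:ℝ)) = 2 * π := by field_simp
  rcases hε with he | he
  · set j := (k + m - ka) % m with hj
    refine ⟨j, Nat.mod_lt _ (by omega), ?_⟩
    have hmod : (ka + j) % m = k := mod_eq_helper hka hk
    obtain ⟨c, hc⟩ : ∃ c : ℕ, ka + j = k + m * c := by
      have hdm := Nat.div_add_mod (ka + j) m
      exact ⟨(ka + j) / m, by omega⟩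
    have hcR : (ka:ℝ) + (j:ℝ) = (k:ℝ) + (m:ℝ) * (c:ℝ) := by exact_mod_cast hc
    have hang : (ka:ℝ) * (2 * π / (m:ℝ)) + ε * (j:ℝ) * (2 * π / (m:ℝ))
        = (k:ℝ) * (2 * π / (m:ℝ)) + (c:ℝ) * (2 * π) := by
      rw [he]
      linear_combination (2 * π / (m:ℝ)) * hcR + (c:ℝ) * hmx
    rw [hang, Qp_period_nat]
  · set j := (ka + m - k) % m with hj
    refine ⟨j, Nat.mod_lt _ (by omega), ?_⟩
    have hmod : (k + j) % m = ka := mod_eq_helper hk hka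
    obtain ⟨c, hc⟩ : ∃ c : ℕ, k + j = ka + m * c := by
      have hdm := Nat.div_add_mod (k + j) m
      exact ⟨(k + j) / m, by omega⟩
    have hcR : (k:ℝ) + (j:ℝ) = (ka:ℝ) + (m:ℝ) * (c:ℝ) := by exact_mod_cast hc
    have hang : (k:ℝ) * (2 * π / (m:ℝ))
        = ((ka:ℝ) * (2 * π / (m:ℝ)) + ε * (j:ℝ) * (2 * π / (m:ℝ))) + (c:ℝ) * (2 * π) := by
      rw [he]
      linear_combination (2 * π / (m:ℝ)) * hcR + (c:ℝ) * hmx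
    rw [hang, Qp_period_nat]

lemma base_dichotomy {n m : ℕ} (hm : 3 ≤ m) (hmn : m + 1 = n)
    (o : Plane) {r : ℝ} (hr : 0 < r)
    (v : ZMod n → Plane) (hinj : Function.Injective v)
    (hdisj : ∀ i j : ZMod n, i ≠ j → i + 1 ≠ j → j + 1 ≠ i →
      Disjoint (segment ℝ (v i) (v (i + 1))) (segment ℝ (v j) (v (j + 1))))
    (i0 : ZMod n) (θ0 : ℝ) (P : ℕ → ℕ)
    (hPlt : ∀ t, t < m → P t < m)
    (hPv : ∀ t, t < m → v (i0 + 1 + (t : ZMod n)) =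
      Qp o r (θ0 + 1 * (P t : ℝ) * (2 * π / (m : ℝ))))
    (hP0 : P 0 = 0) : P 1 = 1 ∨ P 1 = m - 1 := by
  have hPinj : ∀ {a b : ℕ}, a < m → b < m → P a = P b → a = b := by
    intro a b ha hb hab
    have hva := hPv a ha
    have hvb := hPv b hb
    rw [hab] at hva
    have h2 := hinj (hva.trans hvb.symm)
    exact zmod_cast_inj (by omega) (by omega) (add_left_cancel h2)
  have h1m : P 1 < m := hPlt 1 (by omega)
  by_contra hc
  push_neg at hc
  have h0 : P 1 ≠ 0 := by
    intro h
    have := hPinj (by omega) (by omega) (h.trans hP0.symm)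
    omega
  exact separation hm hmn o hr v hinj hdisj i0 θ0 1 (Or.inl rfl) P hPlt hPv 0 (P 1)
    (fun s hs => by
      have : s = 0 := by omega
      rw [this]; exact hP0)
    (by omega) rfl (by omega) (by omega)

/-- Let `n ≥ 4` with `n − 1` odd, and let `S` consist of a point `o` together with the `n − 1`
points equally spaced around the circle of center `o` and radius `r > 0`. Then every
counterclockwise polygonization of `S` has an interior angle of measure at least
`2π − 2π/(n−1)`. -/
theorem center_point_construction_angle_lower_bound (n : ℕ) (hn : 4 ≤ n)
    (hodd : Odd (n - 1)) (o : Plane) (r : ℝ) (hr : 0 < r) (S : Set Plane)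
    (hS : S = insert o
      ((fun k : ℕ => o + r • planePt (Real.cos (2 * π * (k : ℝ) / ((n : ℝ) - 1)))
          (Real.sin (2 * π * (k : ℝ) / ((n : ℝ) - 1)))) '' Set.Iio (n - 1))) :
    ∀ v : ZMod n → Plane, IsPolygonization n S v → Counterclockwise n v →
      ∃ i : ZMod n, 2 * π - 2 * π / ((n : ℝ) - 1) ≤ interiorAngle n v i := by
  intro v hpoly hccw
  obtain ⟨hinj, hrange, hcons, hdisj⟩ := hpoly
  haveI : NeZero n := ⟨by omega⟩
  set m := n - 1 with hmdef
  have hm : 3 ≤ m := by omega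
  have hmn : m + 1 = n := by omega
  have hmR : (0:ℝ) < (m:ℝ) := by exact_mod_cast (by omega : 0 < m)
  have hcast : (n:ℝ) - 1 = (m:ℝ) := by
    rw [hmdef, Nat.cast_sub (by omega : 1 ≤ n), Nat.cast_one]
  set x := 2 * π / (m:ℝ) with hxdef
  have hxpos : 0 < x := by rw [hxdef]; positivity
  have hmx : (m:ℝ) * x = 2 * π := by rw [hxdef]; field_simp
  have hm3R : (3:ℝ) ≤ (m:ℝ) := by exact_mod_cast hm
  have hxltpi : x < π := by
    rw [hxdef, div_lt_iff₀ hmR]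
    nlinarith [Real.pi_pos]
  have hSQ : S = insert o ((fun k : ℕ => Qp o r ((k:ℝ) * x)) '' Set.Iio m) := by
    rw [hS]
    congr 1
    apply Set.image_congr'
    intro k
    have harg : 2 * π * (k:ℝ) / ((n:ℝ) - 1) = (k:ℝ) * x := by
      rw [hcast, hxdef]; ring
    rw [harg]
    rfl
  have horange : o ∈ Set.range v := by
    rw [hrange, hSQ]; exact Set.mem_insert _ _
  obtain ⟨i0, hi0⟩ := horange
  have hpt : ∀ i : ZMod n, i ≠ i0 → ∃ k : ℕ, k < m ∧ v i = Qp o r ((k:ℝ) * x) := by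
    intro i hi
    have hvS : v i ∈ S := by rw [← hrange]; exact Set.mem_range_self i
    rw [hSQ] at hvS
    rcases Set.mem_insert_iff.1 hvS with h | h
    · exact absurd (hinj (h.trans hi0.symm)) hi
    · obtain ⟨k, hk, hkv⟩ := h
      exact ⟨k, hk, hkv.symm⟩
  have hne_i0 : ∀ t : ℕ, t < m → i0 + 1 + (t : ZMod n) ≠ i0 := by
    intro t ht h
    have h2 : i0 + ((1 + t : ℕ) : ZMod n) = i0 + ((0:ℕ) : ZMod n) := by
      push_cast
      push_cast at h
      linear_combination h
    have h3 := zmod_cast_inj (a := 1 + t) (b := 0) (by omega) (by omega) (add_left_cancel h2)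
    omega
  have hi01 : i0 + 1 + ((0:ℕ) : ZMod n) = i0 + 1 := by push_cast; ring
  obtain ⟨ka, hkam, hka⟩ := hpt (i0 + 1) (by
    have h := hne_i0 0 (by omega)
    rwa [hi01] at h)
  set θ0 := (ka:ℝ) * x with hθ0
  have habs : ∀ t, t < m → ∃ k : ℕ, k < m ∧ v (i0 + 1 + (t:ZMod n)) = Qp o r ((k:ℝ) * x) :=
    fun t ht => hpt _ (hne_i0 t ht)
  have hframe : ∀ (ε : ℝ), ε = 1 ∨ ε = -1 → ∃ P : ℕ → ℕ, (∀ t, t < m → P t < m) ∧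
      (∀ t, t < m → v (i0 + 1 + (t:ZMod n)) = Qp o r (θ0 + ε * (P t : ℝ) * x)) ∧ P 0 = 0 := by
    intro ε hε
    have hex : ∀ t : ℕ, ∃ j : ℕ,
        (t < m → j < m ∧ v (i0 + 1 + (t:ZMod n)) = Qp o r (θ0 + ε * (j : ℝ) * x))
        ∧ (t = 0 → j = 0) := by
      intro t
      by_cases ht : t < m
      · by_cases ht0 : t = 0
        · refine ⟨0, fun _ => ⟨by omega, ?_⟩, fun _ => rfl⟩
          subst ht0
          rw [hi01, hka]
          congr 1
          push_cast
          ring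
        · obtain ⟨k, hk, hkv⟩ := habs t ht
          obtain ⟨j, hj, hQ⟩ := pos_exists hm o r hkam ε hε hk
          exact ⟨j, fun _ => ⟨hj, by rw [hkv, hQ]⟩, fun h => absurd h ht0⟩
      · exact ⟨0, fun h => absurd h ht, fun _ => rfl⟩
    choose P hP1 hP2 using hex
    exact ⟨P, fun t ht => (hP1 t ht).1, fun t ht => (hP1 t ht).2, hP2 0 rfl⟩
  obtain ⟨Pp, hPplt, hPpv, hPp0⟩ := hframe 1 (Or.inl rfl)
  have hPpv' : ∀ t, t < m → v (i0 + 1 + (t : ZMod n)) =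
      Qp o r (θ0 + 1 * (Pp t : ℝ) * (2 * π / (m : ℝ))) := hPpv
  rcases base_dichotomy hm hmn o hr v hinj hdisj i0 θ0 Pp hPplt hPpv' hPp0 with h1 | h1
  · -- counterclockwise fan: interior angle at center is 2π - x
    have hmono := path_mono hm hmn hodd o hr v hinj hdisj i0 hi0 θ0 1 (Or.inl rfl)
      Pp hPplt hPpv' hPp0 h1
    refine ⟨i0, ?_⟩
    have hlast : v (i0 + 1 + ((m - 1 : ℕ) : ZMod n))
        = Qp o r (θ0 + 1 * ((m - 1 : ℕ):ℝ) * x) := by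
      rw [hPpv (m-1) (by omega), hmono (m-1) (by omega)]
    have him1 : i0 + 1 + ((m - 1 : ℕ) : ZMod n) = i0 - 1 := by
      have e1 : ((m - 1 : ℕ) : ZMod n) = ((n : ℕ) : ZMod n) - 2 := by
        rw [show ((m - 1 : ℕ)) = n - 2 by omega]
        push_cast [show 2 ≤ n by omega]
        ring
      rw [e1, ZMod.natCast_self]
      ring
    have hbval : v (i0 - 1) = Qp o r (θ0 - x) := by
      rw [← him1, hlast]
      have e2 : θ0 + 1 * ((m - 1:ℕ):ℝ) * x = (θ0 - x) + 2 * π := by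
        rw [Nat.cast_sub (by omega : 1 ≤ m), ← hmx]
        ring
      rw [e2, Qp_period]
    have hsub1 : v (i0 + 1) - v i0 = r • uv θ0 := by
      rw [hka, hi0]
      exact add_sub_cancel_left _ _
    have hsub2 : v (i0 - 1) - v i0 = r • uv (θ0 - x) := by
      rw [hbval, hi0]
      exact add_sub_cancel_left _ _
    have hoangle : planeOrientation.oangle (v (i0+1) - v i0) (v (i0-1) - v i0)
        = ((-x : ℝ) : Real.Angle) := by
      rw [hsub1, hsub2, planeOrientation.oangle_smul_left_of_pos _ _ hr,
        planeOrientation.oangle_smul_right_of_pos _ _ hr, oangle_uv]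
      congr 1
      ring
    have htoReal : ((-x : ℝ) : Real.Angle).toReal = -x := by
      rw [Real.Angle.toReal_coe_eq_self_iff_mem_Ioc]
      constructor
      · linarith
      · linarith [Real.pi_pos]
    simp only [interiorAngle, hoangle, htoReal]
    rw [if_neg (by linarith)]
    rw [hcast, ← hxdef]
    linarith
  · -- clockwise fan: contradicts counterclockwise
    exfalso
    obtain ⟨Pm, hPmlt, hPmv, hPm0⟩ := hframe (-1) (Or.inr rfl)
    have hPm1 : Pm 1 = 1 := by
      have hv2p : v (i0 + 1 + ((1:ℕ) : ZMod n)) = Qp o r (θ0 + 1 * ((m-1 : ℕ):ℝ) * x) := by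
        rw [hPpv 1 (by omega), h1]
      have hv2m : v (i0 + 1 + ((1:ℕ) : ZMod n)) = Qp o r (θ0 + (-1) * ((Pm 1 : ℕ):ℝ) * x) :=
        hPmv 1 (by omega)
      have hwrap : Qp o r (θ0 + 1 * ((m-1 : ℕ):ℝ) * x) = Qp o r (θ0 + (-1) * ((1:ℕ):ℝ) * x) := by
        have e2 : θ0 + 1 * ((m - 1:ℕ):ℝ) * x = (θ0 + (-1) * ((1:ℕ):ℝ) * x) + 2 * π := by
          rw [Nat.cast_sub (by omega : 1 ≤ m), ← hmx]
          push_cast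
          ring
        rw [e2, Qp_period]
      have := hv2m.symm.trans (hv2p.trans hwrap)
      exact R_inj hm o hr θ0 (-1) (Or.inr rfl) (hPmlt 1 (by omega)) (by omega) this
    have hmono := path_mono hm hmn hodd o hr v hinj hdisj i0 hi0 θ0 (-1) (Or.inr rfl)
      Pm hPmlt hPmv hPm0 hPm1
    have hval : ∀ t, t < m → v (i0 + 1 + (t:ZMod n)) = Qp o r (θ0 - (t:ℝ) * x) := by
      intro t ht
      rw [hPmv t ht, hmono t ht]
      congr 1
      ring
    have hccw' : 0 < (1 / 2 : ℝ) *
        ∑ i ∈ Finset.range n, det2 (v (i : ZMod n)) (v ((i : ZMod n) + 1)) := hccw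
    set C : ℝ := r^2 * Real.sin (-x) with hC
    have hCneg : C < 0 := by
      rw [hC, Real.sin_neg]
      have h2 : 0 < Real.sin x := Real.sin_pos_of_pos_of_lt_pi hxpos hxltpi
      have h3 : (0:ℝ) < r^2 := by positivity
      nlinarith
    have e1 : ∑ i ∈ Finset.range n, det2 (v (i:ZMod n)) (v ((i:ZMod n)+1))
        = ∑ t ∈ Finset.range n, det2 (v (i0 + (t:ZMod n)) - o) (v (i0 + (t:ZMod n) + 1) - o) := by
      have e2 : ∑ i : ZMod n, det2 (v i - o) (v (i + 1) - o)
          = ∑ i : ZMod n, det2 (v (i0 + i) - o) (v (i0 + i + 1) - o) :=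
        (Fintype.sum_equiv (Equiv.addLeft i0)
          (fun i => det2 (v (i0 + i) - o) (v (i0 + i + 1) - o))
          (fun i => det2 (v i - o) (v (i + 1) - o)) (fun i => rfl)).symm
      rw [sum_range_zmod (fun i => det2 (v i) (v (i+1))), det2_translate v o, e2,
        ← sum_range_zmod (fun i => det2 (v (i0 + i) - o) (v (i0 + i + 1) - o))]
    have hvals : ∀ t : ℕ, t ∈ Finset.range n →
        det2 (v (i0 + (t:ZMod n)) - o) (v (i0 + (t:ZMod n) + 1) - o)
        = C - (if t = 0 then C else 0) - (if t = n-1 then C else 0) := by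
      intro t htmem
      have htn : t < n := Finset.mem_range.1 htmem
      by_cases ht0 : t = 0
      · subst ht0
        rw [if_pos rfl, if_neg (by omega)]
        have : v (i0 + ((0:ℕ):ZMod n)) - o = 0 := by
          rw [show i0 + ((0:ℕ):ZMod n) = i0 by push_cast; ring, hi0, sub_self]
        rw [this]
        simp only [det2, PiLp.zero_apply]
        ring
      by_cases htn1 : t = n - 1
      · subst htn1
        rw [if_neg (by omega), if_pos rfl]
        have hidx : i0 + ((n-1:ℕ):ZMod n) + 1 = i0 := by
          have : ((n-1:ℕ):ZMod n) = ((n:ℕ):ZMod n) - 1 := by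
            push_cast [show 1 ≤ n by omega]
            ring
          rw [this, ZMod.natCast_self]
          ring
        rw [hidx]
        have : v i0 - o = 0 := by rw [hi0, sub_self]
        rw [this]
        simp only [det2, PiLp.zero_apply]
        ring
      · rw [if_neg ht0, if_neg htn1]
        have h1t : 1 ≤ t := by omega
        have htm : t < m := by omega
        have hidxa : i0 + (t : ZMod n) = i0 + 1 + ((t-1 : ℕ) : ZMod n) := by
          rw [Nat.cast_sub h1t]
          ring
        have hidxb : i0 + (t : ZMod n) + 1 = i0 + 1 + ((t : ℕ) : ZMod n) := by
          ring
        rw [hidxb, hidxa, hval (t-1) (by omega), hval t htm, d3]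
        rw [hC]
        congr 1
        rw [Nat.cast_sub h1t]
        push_cast
        ring
    rw [e1, Finset.sum_congr rfl hvals, Finset.sum_sub_distrib, Finset.sum_sub_distrib,
      Finset.sum_const, Finset.card_range,
      Finset.sum_ite_eq' (Finset.range n) 0 (fun _ => C),
      Finset.sum_ite_eq' (Finset.range n) (n-1) (fun _ => C),
      if_pos (Finset.mem_range.2 (by omega : 0 < n)),
      if_pos (Finset.mem_range.2 (by omega : n - 1 < n)), nsmul_eq_mul] at hccw'
    have hn4 : (4:ℝ) ≤ (n:ℝ) := by exact_mod_cast hn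
    nlinarith [hccw', hCneg, hn4]
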